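/- Let n ≥ 4 and let R ∈ S²_B(so(n)) be a curvature operator of Ricci type, i.e. R = (λ̄/(n−1))·I + (2/(n−2))·(Ric₀∧id). Then the Weyl part of R² + R^# equals (1/(n−2)) times the Weyl part of Ric₀∧Ric₀; that is, (R² + R^#)_W = (1/(n−2))·(Ric₀∧Ric₀)_W. -/

import Mathlib

/-!
Common setup: we identify ⋀²ℝⁿ with the Lie algebra `so n` of real skew-symmetric
`n × n` matrices, sending `eᵢ ∧ eⱼ` to the rotation by `π/2` in the plane spanned by
`eᵢ, eⱼ`; the inner product on `so n` is `⟪A, B⟫ = -(1/2)·tr (A * B)`, and under this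
identification `v ∧ w` corresponds to the skew-symmetric matrix `v wᵀ - w vᵀ`, while
the wedge `A ∧ B` of two endomorphisms of `ℝⁿ` acts on a skew matrix `M` by
`M ↦ (1/2)(A M Bᵀ + B M Aᵀ)` (the unique linear extension of
`v∧w ↦ (1/2)(Av ∧ Bw + Bv ∧ Aw)`).
-/

noncomputable section

namespace BW

open Matrix

abbrev Mat (n : ℕ) := Matrix (Fin n) (Fin n) ℝ

/-- `so n`: the space of real skew-symmetric `n × n` matrices (≅ ⋀²ℝⁿ). -/
def so (n : ℕ) : Submodule ℝ (Mat n) where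
  carrier := {A | Aᵀ = -A}
  add_mem' := by
    intro A B hA hB
    simp only [Set.mem_setOf_eq] at *
    rw [Matrix.transpose_add, hA, hB, neg_add]
  zero_mem' := by simp
  smul_mem' := by
    intro c A hA
    simp only [Set.mem_setOf_eq] at *
    rw [Matrix.transpose_smul, hA, smul_neg]

variable {n : ℕ}

lemma mem_so_iff {A : Mat n} : A ∈ so n ↔ Aᵀ = -A := Iff.rfl

/-- The inner product `⟨A,B⟩ = -(1/2)·tr(AB)` on `so n`. -/
def ip (A B : so n) : ℝ := -(1/2) * Matrix.trace ((A : Mat n) * (B : Mat n))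

/-- `ip` as a linear map in the second variable. -/
def ipL (A : so n) : so n →ₗ[ℝ] ℝ where
  toFun B := ip A B
  map_add' B C := by
    simp only [ip, Submodule.coe_add, Matrix.mul_add, Matrix.trace_add]; ring
  map_smul' c B := by
    simp only [ip, SetLike.val_smul, Matrix.mul_smul, Matrix.trace_smul, smul_eq_mul,
      RingHom.id_apply]; ring

/-- The Lie bracket (matrix commutator) on `so n`. -/
def brk (A B : so n) : so n :=
  ⟨(A : Mat n) * (B : Mat n) - (B : Mat n) * (A : Mat n), by
    have hA : (A : Mat n)ᵀ = -(A : Mat n) := A.2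
    have hB : (B : Mat n)ᵀ = -(B : Mat n) := B.2
    rw [mem_so_iff, Matrix.transpose_sub, Matrix.transpose_mul, Matrix.transpose_mul, hA, hB]
    noncomm_ring⟩

/-- Auxiliary linear map underlying `A ∧ B`. -/
def wedgeAux (A B : Mat n) : Mat n →ₗ[ℝ] Mat n where
  toFun M := (1/2 : ℝ) • (A * M * Bᵀ + B * M * Aᵀ)
  map_add' M N := by
    simp only [mul_add, add_mul, smul_add]
    module
  map_smul' c M := by
    simp only [mul_smul_comm, smul_mul_assoc, RingHom.id_apply]
    module

lemma wedgeAux_mem (A B : Mat n) : ∀ M ∈ so n, wedgeAux A B M ∈ so n := by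
  intro M hM
  rw [mem_so_iff] at hM ⊢
  show ((1/2 : ℝ) • (A * M * Bᵀ + B * M * Aᵀ))ᵀ = -((1/2 : ℝ) • (A * M * Bᵀ + B * M * Aᵀ))
  rw [Matrix.transpose_smul, Matrix.transpose_add, Matrix.transpose_mul, Matrix.transpose_mul,
    Matrix.transpose_mul, Matrix.transpose_mul, Matrix.transpose_transpose,
    Matrix.transpose_transpose, hM]
  simp only [Matrix.neg_mul, Matrix.mul_neg, Matrix.mul_assoc, smul_neg, neg_add, smul_add]
  abel

/-- The wedge `A ∧ B` of two endomorphisms of ℝⁿ, as an endomorphism of `so n ≅ ⋀²ℝⁿ`: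
the unique linear map with `(A ∧ B)(v ∧ w) = (1/2)(Av ∧ Bw + Bv ∧ Aw)`. -/
def wedge (A B : Mat n) : Module.End ℝ (so n) :=
  (wedgeAux A B).restrict (p := so n) (q := so n) (wedgeAux_mem A B)

/-- The index set of pairs `i < j`. -/
def pairs (n : ℕ) : Finset (Fin n × Fin n) := Finset.univ.filter fun p => p.1 < p.2

/-- The standard basis vector `eᵢ` of ℝⁿ. -/
def evec (i : Fin n) : Fin n → ℝ := fun k => if k = i then 1 else 0

/-- `v ∧ w`, as an element of `so n ≅ ⋀²ℝⁿ`. -/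
def vwedge (v w : Fin n → ℝ) : so n :=
  ⟨Matrix.of fun i j => v i * w j - w i * v j, by
    rw [mem_so_iff]
    ext i j
    simp only [Matrix.transpose_apply, Matrix.of_apply, Matrix.neg_apply]
    ring⟩

/-- The orthonormal basis vector `eᵢ ∧ eⱼ` of `so n ≅ ⋀²ℝⁿ`. -/
def bvec (i j : Fin n) : so n := vwedge (evec i) (evec j)

/-- Hamilton's sharp product `R # S`: the self-adjoint endomorphism of `so n` determined by
`⟨(R#S)h, h⟩ = (1/2)·Σ_{α,β} ⟨[R(b_α), S(b_β)], h⟩·⟨[b_α, b_β], h⟩`,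
where `(b_α)` is the orthonormal basis `(eᵢ ∧ eⱼ)_{i<j}` of `so n`. -/
def sharp (R S : Module.End ℝ (so n)) : Module.End ℝ (so n) :=
  (1/4 : ℝ) • ∑ p ∈ pairs n, ∑ q ∈ pairs n,
    ((ipL (brk (R (bvec p.1 p.2)) (S (bvec q.1 q.2)))).smulRight
        (brk (bvec p.1 p.2) (bvec q.1 q.2))
      + (ipL (brk (bvec p.1 p.2) (bvec q.1 q.2))).smulRight
        (brk (R (bvec p.1 p.2)) (S (bvec q.1 q.2))))

/-- The right-hand side `R² + R^#` of Hamilton's ODE. -/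
def Qode (R : Module.End ℝ (so n)) : Module.End ℝ (so n) := R * R + sharp R R

/-- The coordinates `R_{ijkl} = ⟨R(eᵢ∧eⱼ), e_k∧e_l⟩` of an endomorphism of `so n`. -/
def Rcoord (R : Module.End ℝ (so n)) (i j k l : Fin n) : ℝ := ip (R (bvec i j)) (bvec k l)

/-- Self-adjointness with respect to the inner product `ip`. -/
def selfAdjEnd (R : Module.End ℝ (so n)) : Prop := ∀ X Y : so n, ip (R X) Y = ip X (R Y)

/-- A curvature operator: a self-adjoint endomorphism of `so n ≅ ⋀²ℝⁿ` satisfying the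
first Bianchi identity.  (`isCurvOp` carves out `S²_B(so n)`.) -/
def isCurvOp (R : Module.End ℝ (so n)) : Prop :=
  selfAdjEnd R ∧
    ∀ i j k l : Fin n, Rcoord R i j k l + Rcoord R j k i l + Rcoord R k i j l = 0

/-- The Ricci tensor `Ric_{ij} = Σ_k R_{ikjk}` of `R`. -/
def RicM (R : Module.End ℝ (so n)) : Mat n := Matrix.of fun i j => ∑ k, Rcoord R i k j k

/-- `λ̄ = tr(Ric)/n`. -/
def lamb (R : Module.End ℝ (so n)) : ℝ := Matrix.trace (RicM R) / (n : ℝ)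

/-- The traceless Ricci tensor `Ric₀ = Ric - (tr Ric / n)·id`. -/
def Ric0 (R : Module.End ℝ (so n)) : Mat n := RicM R - lamb R • (1 : Mat n)

/-- `σ = tr(Ric₀²)/n`. -/
def sigmaR (R : Module.End ℝ (so n)) : ℝ := Matrix.trace (Ric0 R * Ric0 R) / (n : ℝ)

/-- `R_I = (λ̄/(n-1))·(id ∧ id)`, the projection of `R` onto `⟨I⟩`. -/
def RI (R : Module.End ℝ (so n)) : Module.End ℝ (so n) :=
  (lamb R / ((n : ℝ) - 1)) • wedge (1 : Mat n) (1 : Mat n)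

/-- `R_{Ric₀} = (2/(n-2))·(Ric₀ ∧ id)`, the projection of `R` onto `⟨Ric₀⟩`. -/
def RRic0 (R : Module.End ℝ (so n)) : Module.End ℝ (so n) :=
  (2 / ((n : ℝ) - 2)) • wedge (Ric0 R) (1 : Mat n)

/-- The linear map `ℓ_{a,b}(R) = R + 2(n-1)a·R_I + (n-2)b·R_{Ric₀}`. -/
def lab (a b : ℝ) (R : Module.End ℝ (so n)) : Module.End ℝ (so n) :=
  R + (2 * ((n : ℝ) - 1) * a) • RI R + (((n : ℝ) - 2) * b) • RRic0 R

/-- Positive semidefiniteness of the quadratic form of an endomorphism of `so n`. -/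
def posSemidefEnd (R : Module.End ℝ (so n)) : Prop := ∀ X : so n, 0 ≤ ip (R X) X

/-- Positive definiteness of the quadratic form of an endomorphism of `so n`. -/
def posDefEnd (R : Module.End ℝ (so n)) : Prop := ∀ X : so n, X ≠ 0 → 0 < ip (R X) X

/-- `R` is 2-nonnegative: the sum of its two smallest eigenvalues is nonnegative;
equivalently (Ky Fan), `q_R(X) + q_R(Y) ≥ 0` for all orthonormal pairs `X, Y`. -/
def twoNonneg (R : Module.End ℝ (so n)) : Prop :=
  ∀ X Y : so n, ip X X = 1 → ip Y Y = 1 → ip X Y = 0 → 0 ≤ ip (R X) X + ip (R Y) Y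

/-- The (Frobenius) norm of an endomorphism of `so n`, computed in the orthonormal
basis `(eᵢ ∧ eⱼ)_{i<j}`. -/
def endNorm (R : Module.End ℝ (so n)) : ℝ :=
  Real.sqrt (∑ p ∈ pairs n, ip (R (bvec p.1 p.2)) (R (bvec p.1 p.2)))

/-- The tangent cone `T_R C`: the closure of `{t·(S - R) : S ∈ C, t ≥ 0}`. -/
def tangCone (C : Set (Module.End ℝ (so n))) (R : Module.End ℝ (so n)) :
    Set (Module.End ℝ (so n)) :=
  {X | ∀ ε > 0, ∃ S ∈ C, ∃ t : ℝ, 0 ≤ t ∧ endNorm (X - t • (S - R)) < ε}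

/-- `C` is a closed subset of the space of endomorphisms of `so n`. -/
def isClosedSet (C : Set (Module.End ℝ (so n))) : Prop :=
  ∀ X, (∀ ε > 0, ∃ Y ∈ C, endNorm (X - Y) < ε) → X ∈ C

/-- The interior of `C` relative to the subspace `S²_B(so n)` of curvature operators. -/
def interiorCurv (C : Set (Module.End ℝ (so n))) : Set (Module.End ℝ (so n)) :=
  {X | isCurvOp X ∧ ∃ ε > 0, ∀ Y, isCurvOp Y → endNorm (Y - X) < ε → Y ∈ C}

/-- Auxiliary linear map `M ↦ g M gᵀ` on matrices. -/
def conjAux (g : Mat n) : Mat n →ₗ[ℝ] Mat n where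
  toFun M := g * M * gᵀ
  map_add' M N := by simp only [mul_add, add_mul]
  map_smul' c M := by simp only [mul_smul_comm, smul_mul_assoc, RingHom.id_apply]

/-- `⋀²g` : the action `M ↦ g M gᵀ` of `g` on `so n ≅ ⋀²ℝⁿ` (for `g` orthogonal this is
the second exterior power of `g`). -/
def conjSo (g : Mat n) : Module.End ℝ (so n) :=
  (conjAux g).restrict (p := so n) (q := so n) (fun M hM => by
    rw [mem_so_iff] at hM ⊢
    show (g * M * gᵀ)ᵀ = -(g * M * gᵀ)
    rw [Matrix.transpose_mul, Matrix.transpose_mul, Matrix.transpose_transpose, hM]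
    simp only [Matrix.neg_mul, Matrix.mul_neg, Matrix.mul_assoc])

/-- The action `g · R = (⋀²g) ∘ R ∘ (⋀²g)⁻¹` of an orthogonal matrix `g`
(whose inverse is `gᵀ`) on endomorphisms of `so n`. -/
def onAct (g : Mat n) (R : Module.End ℝ (so n)) : Module.End ℝ (so n) :=
  conjSo g * R * conjSo gᵀ

/-- Two sets are at Hausdorff distance at most `ε` from each other. -/
def hdClose (A B : Set (Module.End ℝ (so n))) (ε : ℝ) : Prop :=
  (∀ X ∈ A, ∃ Y ∈ B, endNorm (X - Y) ≤ ε) ∧ ∀ Y ∈ B, ∃ X ∈ A, endNorm (X - Y) ≤ ε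

/-- The truncation `C ∩ {‖R‖ ≤ 1}`. -/
def truncSet (C : Set (Module.End ℝ (so n))) : Set (Module.End ℝ (so n)) :=
  {R ∈ C | endNorm R ≤ 1}


/-- The Weyl part `S_W = S - S_I - S_{Ric₀}` of an endomorphism of `so n`. -/
def weylPart (S : Module.End ℝ (so n)) : Module.End ℝ (so n) := S - RI S - RRic0 S


/-! ### Auxiliary lemmas -/

section Aux

open Finset

/-- The matrix of `eᵢ ∧ eⱼ`. -/
def bm (i j : Fin n) : Mat n := ((bvec i j : so n) : Mat n)

lemma bm_apply (i j k l : Fin n) :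
    bm i j k l = (if k = i then (1:ℝ) else 0) * (if l = j then (1:ℝ) else 0)
      - (if k = j then (1:ℝ) else 0) * (if l = i then (1:ℝ) else 0) := rfl

lemma bm_skew (i j : Fin n) : (bm i j)ᵀ = -(bm i j) := (bvec i j).2

lemma bm_swap (i j : Fin n) : bm j i = -(bm i j) := by
  ext k l; simp only [Matrix.neg_apply, bm_apply]; ring

lemma bm_diag (i : Fin n) : bm i i = 0 := by
  ext k l; simp [bm_apply]

lemma bvec_val (i j : Fin n) : ((bvec i j : so n) : Mat n) = bm i j := rfl

lemma ip_def (x y : so n) :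
    ip x y = -(1/2 : ℝ) * Matrix.trace ((x : Mat n) * (y : Mat n)) := rfl

lemma brk_val (x y : so n) :
    ((brk x y : so n) : Mat n) = (x : Mat n) * y - (y : Mat n) * x := rfl

lemma skew_entry {N : Mat n} (hN : Nᵀ = -N) (k l : Fin n) : N l k = -N k l := by
  have := congrFun (congrFun hN k) l
  simpa [Matrix.transpose_apply] using this

lemma trace_sym_skew {S N : Mat n} (hS :Sᵀ = S) (hN : Nᵀ = -N) :
    Matrix.trace (S * N) = 0 := by
  have h1 : Matrix.trace (S * N) = Matrix.trace ((S * N)ᵀ) := (Matrix.trace_transpose _).symm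
  rw [Matrix.transpose_mul, hS, hN, Matrix.neg_mul, Matrix.trace_neg,
    Matrix.trace_mul_comm] at h1
  rw [Matrix.trace_mul_comm]
  linarith

lemma entry_of_trace {N : Mat n} (hN : Nᵀ = -N) (k l : Fin n) :
    -(1/2 : ℝ) * Matrix.trace (N * bm k l) = N k l := by
  have h : Matrix.trace (N * bm k l) = N l k - N k l := by
    simp [Matrix.trace, Matrix.diag, Matrix.mul_apply, bm_apply, Finset.sum_sub_distrib,
      mul_sub, Finset.mul_sum, ite_mul, mul_ite, Finset.sum_ite_eq, Finset.sum_ite_eq']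
  rw [h, skew_entry hN]; ring

lemma ip_bvec_right (x : so n) (k l : Fin n) : ip x (bvec k l) = (x : Mat n) k l :=
  entry_of_trace x.2 k l

lemma sum_entry_smul {N : Mat n} (hN : Nᵀ = -N) :
    ∑ k : Fin n, ∑ l : Fin n, N k l • bm k l = (2:ℝ) • N := by
  ext s t
  simp only [Matrix.sum_apply, Matrix.smul_apply, bm_apply, smul_eq_mul]
  simp only [mul_sub, mul_ite, mul_one, mul_zero, ite_mul, zero_mul, one_mul]
  rw [Finset.sum_comm]
  simp [Finset.sum_ite_eq, Finset.sum_ite_eq', Finset.sum_sub_distrib, skew_entry hN s t]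
  try ring

lemma sum_entry_smul_map {N : Mat n} (hN : Nᵀ = -N) (φ : Mat n →ₗ[ℝ] Mat n) :
    ∑ k : Fin n, ∑ l : Fin n, N k l • φ (bm k l) = φ ((2:ℝ) • N) := by
  rw [← sum_entry_smul hN]
  rw [map_sum]
  refine Finset.sum_congr rfl fun k _ => ?_
  rw [map_sum]
  exact Finset.sum_congr rfl fun l _ => (map_smul φ _ _).symm

lemma two_smul_sum_pairs (f : Fin n × Fin n → Mat n) (hsym : ∀ i j : Fin n, f (j, i) = f (i, j))
    (hdiag : ∀ i, f (i, i) = 0) :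
    ∑ p ∈ pairs n, f p = (1/2 : ℝ) • ∑ i : Fin n, ∑ j : Fin n, f (i, j) := by
  classical
  have h1 : ∑ i : Fin n, ∑ j : Fin n, f (i, j)
      = ∑ p ∈ (Finset.univ : Finset (Fin n × Fin n)), f p := by
    rw [← Finset.univ_product_univ, Finset.sum_product]
  have h2 := Finset.sum_filter_add_sum_filter_not (Finset.univ : Finset (Fin n × Fin n))
      (fun p => p.1 < p.2) f
  have h3 : ∑ p ∈ Finset.univ.filter (fun p : Fin n × Fin n => ¬ p.1 < p.2), f p
      = ∑ p ∈ pairs n, f p := by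
    have hswap : ∑ p ∈ Finset.univ.filter (fun p : Fin n × Fin n => ¬ p.1 < p.2), f p
        = ∑ p ∈ Finset.univ.filter (fun p : Fin n × Fin n => ¬ p.2 < p.1), f p.swap := by
      refine Finset.sum_nbij' (fun p => p.swap) (fun p => p.swap) ?_ ?_ ?_ ?_ ?_ <;>
        simp [Prod.swap]
    rw [hswap]
    have h4 := Finset.sum_filter_add_sum_filter_not
        (Finset.univ.filter (fun p : Fin n × Fin n => ¬ p.2 < p.1))
        (fun p => p.1 < p.2) (fun p => f p.swap)
    have h5 : ∑ p ∈ (Finset.univ.filter (fun p : Fin n × Fin n => ¬ p.2 < p.1)).filter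
        (fun p => ¬ p.1 < p.2), f p.swap = 0 := by
      refine Finset.sum_eq_zero fun p hp => ?_
      simp only [Finset.mem_filter] at hp
      have he : p.1 = p.2 := le_antisymm (not_lt.mp hp.1.2) (not_lt.mp hp.2)
      have : p.swap = (p.2, p.1) := rfl
      rw [this, ← he]
      exact hdiag p.1
    have h6 : (Finset.univ.filter (fun p : Fin n × Fin n => ¬ p.2 < p.1)).filter
        (fun p => p.1 < p.2) = pairs n := by
      rw [Finset.filter_filter]
      refine Finset.filter_congr fun p _ => ?_
      constructor
      · exact fun h => h.2
      · exact fun h => ⟨not_lt.mpr h.le, h⟩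
    have h7 : ∑ p ∈ pairs n, f p.swap = ∑ p ∈ pairs n, f p :=
      Finset.sum_congr rfl fun p _ => hsym p.1 p.2
    rw [h6, h7, h5, add_zero] at h4
    exact h4.symm
  rw [h1, ← h2, h3]
  have hpp : Finset.univ.filter (fun p : Fin n × Fin n => p.1 < p.2) = pairs n := rfl
  rw [hpp]
  generalize (∑ p ∈ pairs n, f p) = T
  rw [smul_add]
  module

lemma sum_bm_sandwich (Y : Mat n) :
    ∑ i : Fin n, ∑ j : Fin n, bm i j * Y * bm i j
      = (2:ℝ) • Yᵀ - (2 * Matrix.trace Y) • (1 : Mat n) := by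
  ext s t
  simp only [Matrix.sum_apply, Matrix.sub_apply, Matrix.smul_apply, Matrix.transpose_apply,
    Matrix.one_apply, smul_eq_mul, Matrix.mul_apply, bm_apply, Matrix.trace, Matrix.diag]
  simp only [sub_mul, mul_sub, ite_mul, mul_ite, one_mul, mul_one, zero_mul, mul_zero,
    Finset.sum_sub_distrib, Finset.sum_ite_eq, Finset.sum_ite_eq', Finset.mem_univ, if_true]
  by_cases h : s = t <;> simp [h] <;> ring

lemma sw (W Y Z : Mat n) :
    ∑ i : Fin n, ∑ j : Fin n, W * bm i j * Y * bm i j * Z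
      = W * ((2:ℝ) • Yᵀ - (2 * Matrix.trace Y) • (1 : Mat n)) * Z := by
  have h : ∀ i j : Fin n, W * bm i j * Y * bm i j * Z = W * (bm i j * Y * bm i j) * Z := by
    intro i j; noncomm_ring
  simp only [h]
  rw [← sum_bm_sandwich Y]
  simp [Finset.mul_sum, Finset.sum_mul]

/-- The matrix-level operator `X ↦ a•X + c•(AX+XA)`. -/
def LmFun (A : Mat n) (a c : ℝ) (P : Mat n) : Mat n := a • P + c • (A * P + P * A)

/-- `LmFun` as a linear map. -/
def LmL (A : Mat n) (a c : ℝ) : Mat n →ₗ[ℝ] Mat n where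
  toFun := LmFun A a c
  map_add' P Q := by simp only [LmFun, mul_add, add_mul, smul_add]; module
  map_smul' r P := by
    simp only [LmFun, RingHom.id_apply, mul_smul_comm, smul_mul_assoc, smul_add, smul_smul,
      mul_comm]

lemma LmL_apply (A : Mat n) (a c : ℝ) (P : Mat n) : LmL A a c P = LmFun A a c P := rfl

lemma LmFun_skew {A : Mat n} (hA : Aᵀ = A) (a c : ℝ) {P : Mat n} (hP : Pᵀ = -P) :
    (LmFun A a c P)ᵀ = -(LmFun A a c P) := by
  simp only [LmFun, Matrix.transpose_add, Matrix.transpose_smul, Matrix.transpose_mul, hA, hP]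
  simp only [Matrix.neg_mul, Matrix.mul_neg, smul_neg, neg_add, smul_add]
  abel

lemma comm_skew {P Q : Mat n} (hP : Pᵀ = -P) (hQ : Qᵀ = -Q) :
    (P * Q - Q * P)ᵀ = -(P * Q - Q * P) := by
  simp only [Matrix.transpose_sub, Matrix.transpose_mul, hP, hQ]
  simp only [Matrix.neg_mul, Matrix.mul_neg, neg_neg]
  abel

lemma trace_LmFun (A : Mat n) (a c : ℝ) (P Q : Mat n) :
    Matrix.trace (LmFun A a c P * Q) = Matrix.trace (P * LmFun A a c Q) := by
  have e1 : Matrix.trace (A * P * Q) = Matrix.trace (P * (Q * A)) := by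
    rw [Matrix.trace_mul_cycle, Matrix.trace_mul_cycle, ← mul_assoc]
  have e2 : Matrix.trace (P * A * Q) = Matrix.trace (P * (A * Q)) := by
    rw [mul_assoc]
  simp only [LmFun, Matrix.add_mul, Matrix.mul_add, Matrix.smul_mul, Matrix.mul_smul,
    Matrix.trace_add, Matrix.trace_smul, e1, e2]
  ring

lemma ip_brk_eq (u v x : so n) :
    ip (brk u v) x = -(1/2 : ℝ) * Matrix.trace ((v : Mat n) *
      ((x : Mat n) * (u : Mat n) - (u : Mat n) * (x : Mat n))) := by
  have e1 : Matrix.trace ((u : Mat n) * (v : Mat n) * (x : Mat n))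
      = Matrix.trace ((v : Mat n) * ((x : Mat n) * (u : Mat n))) := by
    rw [Matrix.trace_mul_cycle, Matrix.trace_mul_comm, ← mul_assoc]
  rw [ip_def, brk_val, Matrix.sub_mul, Matrix.mul_sub, Matrix.trace_sub, Matrix.trace_sub,
    e1, mul_assoc]

/-- The summand of the sharp computation. -/
def KS (A : Mat n) (a c : ℝ) (Xv : Mat n) (i j : Fin n) : Mat n :=
  bm i j * LmFun A a c (Xv * LmFun A a c (bm i j) - LmFun A a c (bm i j) * Xv)
  - LmFun A a c (Xv * LmFun A a c (bm i j) - LmFun A a c (bm i j) * Xv) * bm i j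
  + (LmFun A a c (bm i j) * LmFun A a c (Xv * bm i j - bm i j * Xv)
  - LmFun A a c (Xv * bm i j - bm i j * Xv) * LmFun A a c (bm i j))

set_option maxHeartbeats 2000000 in
lemma bigK (A : Mat n) (a c : ℝ) (Xv : Mat n) (hA : Aᵀ = A) (htrA : Matrix.trace A = 0)
    (hX : Xvᵀ = -Xv) (htrX : Matrix.trace Xv = 0) :
    ∑ i : Fin n, ∑ j : Fin n, KS A a c Xv i j
      = (8*(a^2*((n:ℝ)-2)) + 8*c^2*Matrix.trace (A*A)) • Xv
        + (8*a*c*((n:ℝ)-4)) • (A*Xv + Xv*A) + (8*c^2*((n:ℝ)-4)) • (A*Xv*A)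
        - (16*c^2) • (A*A*Xv + Xv*(A*A)) := by
  have htrAX : Matrix.trace (A * Xv) = 0 := trace_sym_skew hA hX
  have htrXA : Matrix.trace (Xv * A) = 0 := by rw [Matrix.trace_mul_comm]; exact htrAX
  have hAA : (A * A)ᵀ = A * A := by rw [Matrix.transpose_mul, hA]
  have htrAAX : Matrix.trace (A * A * Xv) = 0 := trace_sym_skew hAA hX
  have htrAXA : Matrix.trace (A * Xv * A) = 0 := by
    rw [Matrix.trace_mul_cycle]; exact htrAAX
  have htrXAA : Matrix.trace (Xv * (A * A)) = 0 := by
    rw [Matrix.trace_mul_comm]; exact htrAAX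
  have htrAAX' : Matrix.trace (A * (A * Xv)) = 0 := by rw [← mul_assoc]; exact htrAAX
  have htrAXA' : Matrix.trace (A * (Xv * A)) = 0 := by rw [← mul_assoc]; exact htrAXA
  have h1 : ∀ i j : Fin n, KS A a c Xv i j =
      ((c*c : ℝ)) • ((A * A) * bm i j * (Xv) * bm i j * (1:Mat n))
      + (((-1)*c*c : ℝ)) • ((A * Xv * A) * bm i j * (1:Mat n) * bm i j * (1:Mat n))
      + (((-2)*c*c : ℝ)) • ((A * Xv) * bm i j * (A) * bm i j * (1:Mat n))
      + (((-2)*a*c : ℝ)) • ((A * Xv) * bm i j * (1:Mat n) * bm i j * (1:Mat n))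
      + (((-1)*c*c : ℝ)) • ((A * Xv) * bm i j * (1:Mat n) * bm i j * (A))
      + (((2)*c*c : ℝ)) • ((A) * bm i j * (A * Xv) * bm i j * (1:Mat n))
      + (((-1)*c*c : ℝ)) • ((A) * bm i j * (A) * bm i j * (Xv))
      + (((2)*c*c : ℝ)) • ((A) * bm i j * (Xv * A) * bm i j * (1:Mat n))
      + (((4)*a*c : ℝ)) • ((A) * bm i j * (Xv) * bm i j * (1:Mat n))
      + (((2)*c*c : ℝ)) • ((A) * bm i j * (Xv) * bm i j * (A))
      + (((-1)*a*c : ℝ)) • ((A) * bm i j * (1:Mat n) * bm i j * (Xv))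
      + (((-1)*c*c : ℝ)) • ((A) * bm i j * (1:Mat n) * bm i j * (Xv * A))
      + (((-1)*c*c : ℝ)) • ((Xv * A) * bm i j * (A) * bm i j * (1:Mat n))
      + (((-1)*a*c : ℝ)) • ((Xv * A) * bm i j * (1:Mat n) * bm i j * (1:Mat n))
      + (((-2)*c*c : ℝ)) • ((Xv) * bm i j * (A * A) * bm i j * (1:Mat n))
      + (((-4)*a*c : ℝ)) • ((Xv) * bm i j * (A) * bm i j * (1:Mat n))
      + (((-1)*c*c : ℝ)) • ((Xv) * bm i j * (A) * bm i j * (A))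
      + (((-2)*a*a : ℝ)) • ((Xv) * bm i j * (1:Mat n) * bm i j * (1:Mat n))
      + (((-1)*a*c : ℝ)) • ((Xv) * bm i j * (1:Mat n) * bm i j * (A))
      + ((c*c : ℝ)) • ((1:Mat n) * bm i j * (A * A * Xv) * bm i j * (1:Mat n))
      + (((-2)*c*c : ℝ)) • ((1:Mat n) * bm i j * (A * A) * bm i j * (Xv))
      + (((2)*c*c : ℝ)) • ((1:Mat n) * bm i j * (A * Xv * A) * bm i j * (1:Mat n))
      + (((4)*a*c : ℝ)) • ((1:Mat n) * bm i j * (A * Xv) * bm i j * (1:Mat n))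
      + (((2)*c*c : ℝ)) • ((1:Mat n) * bm i j * (A * Xv) * bm i j * (A))
      + (((-1)*c*c : ℝ)) • ((1:Mat n) * bm i j * (A) * bm i j * (A * Xv))
      + (((-4)*a*c : ℝ)) • ((1:Mat n) * bm i j * (A) * bm i j * (Xv))
      + (((-2)*c*c : ℝ)) • ((1:Mat n) * bm i j * (A) * bm i j * (Xv * A))
      + ((c*c : ℝ)) • ((1:Mat n) * bm i j * (Xv * A * A) * bm i j * (1:Mat n))
      + (((4)*a*c : ℝ)) • ((1:Mat n) * bm i j * (Xv * A) * bm i j * (1:Mat n))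
      + (((2)*c*c : ℝ)) • ((1:Mat n) * bm i j * (Xv * A) * bm i j * (A))
      + (((4)*a*a : ℝ)) • ((1:Mat n) * bm i j * (Xv) * bm i j * (1:Mat n))
      + (((4)*a*c : ℝ)) • ((1:Mat n) * bm i j * (Xv) * bm i j * (A))
      + ((c*c : ℝ)) • ((1:Mat n) * bm i j * (Xv) * bm i j * (A * A))
      + (((-1)*a*c : ℝ)) • ((1:Mat n) * bm i j * (1:Mat n) * bm i j * (A * Xv))
      + (((-1)*c*c : ℝ)) • ((1:Mat n) * bm i j * (1:Mat n) * bm i j * (A * Xv * A))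
      + (((-2)*a*a : ℝ)) • ((1:Mat n) * bm i j * (1:Mat n) * bm i j * (Xv))
      + (((-2)*a*c : ℝ)) • ((1:Mat n) * bm i j * (1:Mat n) * bm i j * (Xv * A)) := by
    intro i j
    simp only [KS, LmFun, mul_add, add_mul, mul_sub, sub_mul, smul_add, smul_sub,
      mul_smul_comm, smul_mul_assoc, smul_smul, mul_assoc, mul_one, one_mul,
      Matrix.mul_one, Matrix.one_mul]
    module
  simp only [h1]
  simp only [Finset.sum_add_distrib]
  simp only [← Finset.smul_sum]
  simp only [sw]
  simp only [Fintype.card_fin, Matrix.transpose_mul, Matrix.transpose_one, hA, hX, htrA, htrX,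
    htrAX, htrXA, htrAAX, htrAXA, htrXAA, htrAAX', htrAXA', Matrix.trace_one, mul_add, add_mul, mul_sub, sub_mul,
    smul_add, smul_sub, smul_smul, smul_mul_assoc, mul_smul_comm, mul_one, one_mul,
    Matrix.mul_one, Matrix.one_mul, neg_mul, mul_neg, smul_neg, neg_neg, neg_smul, mul_assoc,
    mul_zero, zero_mul, zero_smul, smul_zero, add_zero, zero_add, sub_zero]
  match_scalars <;> ring

lemma ipL_apply (u v : so n) : ipL u v = ip u v := rfl

lemma LmFun_zero (A : Mat n) (a c : ℝ) : LmFun A a c 0 = 0 := by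
  simp [LmFun]

lemma LmFun_neg (A : Mat n) (a c : ℝ) (P : Mat n) : LmFun A a c (-P) = -LmFun A a c P := by
  simp [LmFun, mul_neg, neg_mul]; abel

lemma LmFun_smul (A : Mat n) (a c : ℝ) (r : ℝ) (P : Mat n) :
    LmFun A a c (r • P) = r • LmFun A a c P := map_smul (LmL A a c) r P

lemma LmFun_add (A : Mat n) (a c : ℝ) (P Q : Mat n) :
    LmFun A a c (P + Q) = LmFun A a c P + LmFun A a c Q := map_add (LmL A a c) P Q

lemma LmFun_sub (A : Mat n) (a c : ℝ) (P Q : Mat n) :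
    LmFun A a c (P - Q) = LmFun A a c P - LmFun A a c Q := map_sub (LmL A a c) P Q

set_option maxHeartbeats 1000000 in
lemma sharp_val (A : Mat n) (a c : ℝ) (hA : Aᵀ = A) (htrA : Matrix.trace A = 0)
    (R : Module.End ℝ (so n)) (hRapp : ∀ y : so n, ((R y : so n) : Mat n) = LmFun A a c y)
    (x : so n) :
    ((sharp R R x : so n) : Mat n)
      = (a^2*((n:ℝ)-2) + c^2*Matrix.trace (A*A)) • (x : Mat n)
        + (a*c*((n:ℝ)-4)) • (A*(x : Mat n) + (x : Mat n)*A)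
        + (c^2*((n:ℝ)-4)) • (A*(x : Mat n)*A)
        - (2*c^2) • (A*A*(x : Mat n) + (x : Mat n)*(A*A)) := by
  have hX : ((x : Mat n))ᵀ = -(x : Mat n) := x.2
  have htrX : Matrix.trace ((x : Mat n)) = 0 := by
    have h1 : ((1 : Mat n))ᵀ = (1 : Mat n) := Matrix.transpose_one
    have := trace_sym_skew h1 hX
    simpa using this
  set Xv : Mat n := (x : Mat n) with hXv
  set C : Fin n → Fin n → Mat n := fun i j =>
    LmFun A a c (Xv * LmFun A a c (bm i j) - LmFun A a c (bm i j) * Xv) with hC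
  set D : Fin n → Fin n → Mat n := fun i j => Xv * bm i j - bm i j * Xv with hD
  have hCskew : ∀ i j, (C i j)ᵀ = -C i j := fun i j =>
    LmFun_skew hA a c (comm_skew hX (LmFun_skew hA a c (bm_skew i j)))
  have hDskew : ∀ i j, (D i j)ᵀ = -D i j := fun i j => comm_skew hX (bm_skew i j)
  -- step 1: unfold sharp
  have e0 : ((sharp R R x : so n) : Mat n)
      = (1/4 : ℝ) • ∑ p ∈ pairs n, ∑ q ∈ pairs n,
          (ip (brk (R (bvec p.1 p.2)) (R (bvec q.1 q.2))) x •
              ((brk (bvec p.1 p.2) (bvec q.1 q.2) : so n) : Mat n)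
            + ip (brk (bvec p.1 p.2) (bvec q.1 q.2)) x •
              ((brk (R (bvec p.1 p.2)) (R (bvec q.1 q.2)) : so n) : Mat n)) := by
    simp only [sharp, LinearMap.smul_apply, LinearMap.sum_apply, LinearMap.add_apply,
      LinearMap.smulRight_apply, ipL_apply, SetLike.val_smul, Submodule.coe_add,
      AddSubmonoidClass.coe_finset_sum]
  -- step 2: rewrite the summand
  have hsummand : ∀ p q : Fin n × Fin n,
      ip (brk (R (bvec p.1 p.2)) (R (bvec q.1 q.2))) x •
          ((brk (bvec p.1 p.2) (bvec q.1 q.2) : so n) : Mat n)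
        + ip (brk (bvec p.1 p.2) (bvec q.1 q.2)) x •
          ((brk (R (bvec p.1 p.2)) (R (bvec q.1 q.2)) : so n) : Mat n)
      = (C p.1 p.2) q.1 q.2 • (bm p.1 p.2 * bm q.1 q.2 - bm q.1 q.2 * bm p.1 p.2)
        + (D p.1 p.2) q.1 q.2 • (LmFun A a c (bm p.1 p.2) * LmFun A a c (bm q.1 q.2)
            - LmFun A a c (bm q.1 q.2) * LmFun A a c (bm p.1 p.2)) := by
    intro p q
    have e1 : ip (brk (R (bvec p.1 p.2)) (R (bvec q.1 q.2))) x = (C p.1 p.2) q.1 q.2 := by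
      rw [ip_brk_eq, hRapp, hRapp, bvec_val, bvec_val, trace_LmFun, Matrix.trace_mul_comm]
      exact entry_of_trace (hCskew p.1 p.2) q.1 q.2
    have e2 : ip (brk (bvec p.1 p.2) (bvec q.1 q.2)) x = (D p.1 p.2) q.1 q.2 := by
      rw [ip_brk_eq, bvec_val, bvec_val, Matrix.trace_mul_comm]
      exact entry_of_trace (hDskew p.1 p.2) q.1 q.2
    rw [e1, e2, brk_val, brk_val, hRapp, hRapp]
    rfl
  -- step 3: contract the inner sum over q
  have hinner : ∀ p : Fin n × Fin n, p ∈ pairs n →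
      ∑ q ∈ pairs n,
        (ip (brk (R (bvec p.1 p.2)) (R (bvec q.1 q.2))) x •
            ((brk (bvec p.1 p.2) (bvec q.1 q.2) : so n) : Mat n)
          + ip (brk (bvec p.1 p.2) (bvec q.1 q.2)) x •
            ((brk (R (bvec p.1 p.2)) (R (bvec q.1 q.2)) : so n) : Mat n))
      = KS A a c Xv p.1 p.2 := by
    intro p _
    rw [Finset.sum_congr rfl fun q _ => hsummand p q]
    rw [two_smul_sum_pairs _ ?_ ?_]
    rotate_left
    · intro k l
      dsimp only
      rw [bm_swap l k, skew_entry (hCskew p.1 p.2) k l, skew_entry (hDskew p.1 p.2) k l,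
        LmFun_neg]
      simp only [mul_neg, neg_mul, neg_neg, neg_smul, smul_neg, neg_sub, sub_neg_eq_add]
      module
    · intro i
      dsimp only
      simp [bm_diag, LmFun_zero]
    · -- evaluate the full double sum
      have hsplit : ∀ k l : Fin n,
          (C p.1 p.2) k l • (bm p.1 p.2 * bm k l - bm k l * bm p.1 p.2)
            + (D p.1 p.2) k l • (LmFun A a c (bm p.1 p.2) * LmFun A a c (bm k l)
              - LmFun A a c (bm k l) * LmFun A a c (bm p.1 p.2))
          = (C p.1 p.2) k l • ((LinearMap.mulLeft ℝ (bm p.1 p.2)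
              - LinearMap.mulRight ℝ (bm p.1 p.2)) (bm k l))
            + (D p.1 p.2) k l • (((LinearMap.mulLeft ℝ (LmFun A a c (bm p.1 p.2))).comp
                (LmL A a c) - (LinearMap.mulRight ℝ (LmFun A a c (bm p.1 p.2))).comp
                (LmL A a c)) (bm k l)) := by
        intro k l
        simp [LinearMap.sub_apply, LinearMap.mulLeft_apply, LinearMap.mulRight_apply,
          LinearMap.comp_apply, LmL_apply]
      dsimp only
      simp only [hsplit]
      simp only [Finset.sum_add_distrib]
      rw [sum_entry_smul_map (hCskew p.1 p.2) _, sum_entry_smul_map (hDskew p.1 p.2) _]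
      simp only [LinearMap.sub_apply, LinearMap.mulLeft_apply, LinearMap.mulRight_apply,
        LinearMap.comp_apply, LmL_apply, _root_.map_smul, LmFun_smul]
      rw [KS]
      match_scalars <;> ring
  -- step 4: the outer sum over p
  rw [e0, Finset.sum_congr rfl hinner]
  rw [show (∑ p ∈ pairs n, KS A a c Xv p.1 p.2) = ∑ p ∈ pairs n,
    (fun q : Fin n × Fin n => KS A a c Xv q.1 q.2) p from rfl]
  rw [two_smul_sum_pairs _ ?_ ?_]
  rotate_left
  · intro i j
    dsimp only
    rw [KS, KS, bm_swap j i]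
    simp only [LmFun_neg, LmFun_add, LmFun_sub, mul_neg, neg_mul, mul_add, add_mul,
      mul_sub, sub_mul, neg_neg, sub_neg_eq_add, neg_sub, neg_add]
    abel
  · intro i
    dsimp only
    simp [KS, bm_diag, LmFun_zero]
  · dsimp only
    rw [bigK A a c Xv hA htrA hX htrX]
    match_scalars <;> ring

lemma ric_word (P Q : Mat n) (i j : Fin n) :
    ∑ m : Fin n, (P * bm i m * Q) j m = P j i * Matrix.trace Q - (P * Qᵀ) j i := by
  have hentry : ∀ m : Fin n, (P * bm i m * Q) j m = P j i * Q m m - P j m * Q i m := by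
    intro m
    rw [Matrix.mul_apply]
    have h1 : ∀ q : Fin n, (P * bm i m) j q = P j i * (if q = m then (1:ℝ) else 0)
        - P j m * (if q = i then (1:ℝ) else 0) := by
      intro q
      rw [Matrix.mul_apply]
      simp [bm_apply, mul_sub, mul_ite, Finset.sum_sub_distrib]
    simp only [h1, sub_mul, ite_mul, one_mul, zero_mul, Finset.sum_sub_distrib,
      Finset.sum_ite_eq']
    simp
  simp only [hentry, Finset.sum_sub_distrib, ← Finset.mul_sum]
  have h2 : ∑ m : Fin n, P j m * Q i m = (P * Qᵀ) j i := by
    rw [Matrix.mul_apply]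
    exact Finset.sum_congr rfl fun q _ => by rw [Matrix.transpose_apply]
  have h3 : ∑ m : Fin n, Q m m = Matrix.trace Q := by simp [Matrix.trace, Matrix.diag]
  rw [h2, h3]

lemma ric_word_0 (i j : Fin n) :
    ∑ m : Fin n, (bm i m) j m = (1 : Mat n) j i * (n : ℝ) - (1 : Mat n) j i := by
  have h := ric_word (1 : Mat n) (1 : Mat n) i j
  simpa [Matrix.trace_one] using h

lemma ric_word_l (P : Mat n) (i j : Fin n) :
    ∑ m : Fin n, (P * bm i m) j m = P j i * (n : ℝ) - P j i := by
  have h := ric_word P (1 : Mat n) i j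
  simpa [Matrix.trace_one] using h

lemma ric_word_r (Q : Mat n) (i j : Fin n) :
    ∑ m : Fin n, (bm i m * Q) j m = (1 : Mat n) j i * Matrix.trace Q - Qᵀ j i := by
  have h := ric_word (1 : Mat n) Q i j
  simpa using h

lemma RicM_of_val (A : Mat n) (hA : Aᵀ = A) (htrA : Matrix.trace A = 0)
    (S : Module.End ℝ (so n)) (e f g h : ℝ)
    (hS : ∀ x : so n, ((S x : so n) : Mat n) = e • (x : Mat n)
      + f • (A * (x : Mat n) + (x : Mat n) * A) + g • (A * (x : Mat n) * A)
      - h • (A * A * (x : Mat n) + (x : Mat n) * (A * A))) :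
    RicM S = (e * ((n:ℝ) - 1) - h * Matrix.trace (A * A)) • (1 : Mat n)
      + (f * ((n:ℝ) - 2)) • A - (g + h * ((n:ℝ) - 2)) • (A * A) := by
  have hAs : ∀ p q : Fin n, A q p = A p q := by
    intro p q
    conv_lhs => rw [← hA]
    rw [Matrix.transpose_apply]
  have hAAs : ∀ p q : Fin n, (A * A) q p = (A * A) p q := by
    intro p q
    have hAA : (A * A)ᵀ = A * A := by rw [Matrix.transpose_mul, hA]
    conv_lhs => rw [← hAA]
    rw [Matrix.transpose_apply]
  have h1s : ∀ p q : Fin n, (1 : Mat n) q p = (1 : Mat n) p q := by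
    intro p q
    simp [Matrix.one_apply, eq_comm]
  ext i j
  show ∑ k : Fin n, Rcoord S i k j k = _
  have hco : ∀ k : Fin n, Rcoord S i k j k = ((S (bvec i k) : so n) : Mat n) j k :=
    fun k => ip_bvec_right _ j k
  rw [Finset.sum_congr rfl fun k _ => (hco k).trans (by rw [hS (bvec i k)])]
  simp only [bvec_val, Matrix.add_apply, Matrix.sub_apply, Matrix.smul_apply, smul_eq_mul]
  simp only [Finset.sum_add_distrib, Finset.sum_sub_distrib, ← Finset.mul_sum]
  rw [ric_word_0 i j, ric_word_l A i j, ric_word_r A i j, ric_word A A i j,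
    ric_word_l (A * A) i j, ric_word_r (A * A) i j]
  simp only [hA, htrA, Matrix.add_apply, Matrix.sub_apply, Matrix.smul_apply, smul_eq_mul,
    Matrix.transpose_mul]
  rw [hAs i j, hAAs i j, h1s i j]
  ring

lemma wedge_val (P Q : Mat n) (x : so n) :
    ((wedge P Q x : so n) : Mat n) = (1/2 : ℝ) • (P * (x : Mat n) * Qᵀ + Q * (x : Mat n) * Pᵀ) :=
  rfl

end Aux

set_option maxHeartbeats 2000000 in
/-- Lemma: the Weyl part of `R² + R^#` for a curvature operator of Ricci type. -/
theorem stmt_4 {n : ℕ} (hn : 4 ≤ n) (R : Module.End ℝ (so n)) (hR : isCurvOp R)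
    (hRic : R = (lamb R / ((n : ℝ) - 1)) • wedge (1 : Mat n) (1 : Mat n)
        + (2 / ((n : ℝ) - 2)) • wedge (Ric0 R) (1 : Mat n)) :
    weylPart (Qode R) = (1 / ((n : ℝ) - 2)) • weylPart (wedge (Ric0 R) (Ric0 R)) := by
  have hn4 : (4 : ℝ) ≤ (n : ℝ) := by exact_mod_cast hn
  have hn0 : (n : ℝ) ≠ 0 := by linarith
  have hn1 : ((n : ℝ) - 1) ≠ 0 := by intro h; linarith
  have hn2 : ((n : ℝ) - 2) ≠ 0 := by intro h; linarith
  have hn1' : (-1 + (n : ℝ)) ≠ 0 := by intro h; linarith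
  have hn2' : (-2 + (n : ℝ)) ≠ 0 := by intro h; linarith
  -- symmetry of the Ricci tensor
  have ipcomm : ∀ u v : so n, ip u v = ip v u := fun u v => by
    rw [ip_def, ip_def, Matrix.trace_mul_comm]
  have hRicSym : (RicM R)ᵀ = RicM R := by
    ext i j
    rw [Matrix.transpose_apply]
    show (∑ k : Fin n, Rcoord R j k i k) = ∑ k : Fin n, Rcoord R i k j k
    refine Finset.sum_congr rfl fun k _ => ?_
    show ip (R (bvec j k)) (bvec i k) = ip (R (bvec i k)) (bvec j k)
    calc ip (R (bvec j k)) (bvec i k) = ip (bvec j k) (R (bvec i k)) := hR.1 _ _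
      _ = ip (R (bvec i k)) (bvec j k) := ipcomm _ _
  set A : Mat n := Ric0 R with hAdef
  have hA : Aᵀ = A := by
    rw [hAdef]
    show (RicM R - lamb R • (1 : Mat n))ᵀ = _
    rw [Matrix.transpose_sub, Matrix.transpose_smul, Matrix.transpose_one, hRicSym]
    rfl
  have htrA : Matrix.trace A = 0 := by
    rw [hAdef]
    show Matrix.trace (RicM R - lamb R • (1 : Mat n)) = 0
    rw [Matrix.trace_sub, Matrix.trace_smul, Matrix.trace_one, Fintype.card_fin, lamb, smul_eq_mul]
    field_simp
    ring
  set a : ℝ := lamb R / ((n : ℝ) - 1) with ha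
  set c : ℝ := 1 / ((n : ℝ) - 2) with hc
  set sA : ℝ := Matrix.trace (A * A) with hsA
  -- the action of R
  have hRapp : ∀ y : so n, ((R y : so n) : Mat n) = LmFun A a c (y : Mat n) := by
    intro y
    conv_lhs => rw [hRic]
    simp only [LinearMap.add_apply, LinearMap.smul_apply, Submodule.coe_add,
      SetLike.val_smul, wedge_val, Matrix.transpose_one, hA, Matrix.one_mul, Matrix.mul_one,
      LmFun]
    simp only [ha, hc]
    match_scalars <;> (field_simp <;> ring)
  -- the action of Qode R
  have hQ : ∀ x : so n, ((Qode R x : so n) : Mat n)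
      = (a^2*((n:ℝ)-1) + c^2*sA) • (x : Mat n)
        + (a*c*((n:ℝ)-2)) • (A*(x : Mat n) + (x : Mat n)*A)
        + (c^2*((n:ℝ)-2)) • (A*(x : Mat n)*A)
        - (c^2) • (A*A*(x : Mat n) + (x : Mat n)*(A*A)) := by
    intro x
    have hmul : ((Qode R x : so n) : Mat n)
        = LmFun A a c (LmFun A a c (x : Mat n)) + ((sharp R R x : so n) : Mat n) := by
      simp only [Qode, LinearMap.add_apply, Submodule.coe_add, Module.End.mul_apply]
      rw [hRapp, hRapp]
    rw [hmul, sharp_val A a c hA htrA R hRapp x, ← hsA]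
    simp only [LmFun, smul_add, mul_add, add_mul, mul_smul_comm, smul_mul_assoc, smul_smul,
      mul_assoc]
    match_scalars <;> ring
  -- Ricci data of Qode R
  have hRicQ := RicM_of_val A hA htrA (Qode R) (a^2*((n:ℝ)-1) + c^2*sA) (a*c*((n:ℝ)-2))
    (c^2*((n:ℝ)-2)) (c^2) hQ
  have hlambQ : lamb (Qode R) = (((a^2*((n:ℝ)-1) + c^2*sA) * ((n:ℝ) - 1) - c^2 * sA) * (n:ℝ)
      - (c^2*((n:ℝ)-2) + c^2 * ((n:ℝ) - 2)) * sA) / (n:ℝ) := by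
    rw [lamb, hRicQ]
    simp only [Matrix.trace_sub, Matrix.trace_add, Matrix.trace_smul,
      Matrix.trace_one, Fintype.card_fin, htrA, ← hsA]
    simp only [smul_eq_mul, mul_zero, add_zero]
    try ring_nf
  have hRic0Q : Ric0 (Qode R) = ((a^2*((n:ℝ)-1) + c^2*sA) * ((n:ℝ) - 1) - c^2 * sA
        - (((a^2*((n:ℝ)-1) + c^2*sA) * ((n:ℝ) - 1) - c^2 * sA) * (n:ℝ)
          - (c^2*((n:ℝ)-2) + c^2 * ((n:ℝ) - 2)) * sA) / (n:ℝ)) • (1 : Mat n)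
      + (a*c*((n:ℝ)-2) * ((n:ℝ) - 2)) • A
      - (c^2*((n:ℝ)-2) + c^2 * ((n:ℝ) - 2)) • (A * A) := by
    show RicM (Qode R) - lamb (Qode R) • (1 : Mat n) = _
    rw [hRicQ, hlambQ]
    match_scalars <;> ring
  -- Ricci data of wedge A A
  have hWAA : ∀ x : so n, ((wedge A A x : so n) : Mat n)
      = (0:ℝ) • (x : Mat n) + (0:ℝ) • (A*(x : Mat n) + (x : Mat n)*A)
        + (1:ℝ) • (A*(x : Mat n)*A) - (0:ℝ) • (A*A*(x : Mat n) + (x : Mat n)*(A*A)) := by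
    intro x
    rw [wedge_val, hA]
    match_scalars <;> ring
  have hRicW := RicM_of_val A hA htrA (wedge A A) 0 0 1 0 hWAA
  have hlambW : lamb (wedge A A) = -sA / (n:ℝ) := by
    rw [lamb, hRicW]
    simp only [Matrix.trace_sub, Matrix.trace_add, Matrix.trace_smul,
      Matrix.trace_one, Fintype.card_fin, htrA, ← hsA]
    simp only [smul_eq_mul, mul_zero, add_zero]
    try ring_nf
  have hRic0W : Ric0 (wedge A A) = (sA / (n:ℝ)) • (1 : Mat n) - (1:ℝ) • (A * A) := by
    show RicM (wedge A A) - lamb (wedge A A) • (1 : Mat n) = _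
    rw [hRicW, hlambW]
    match_scalars <;> ring
  -- final assembly
  apply LinearMap.ext
  intro x
  apply Subtype.ext
  simp only [weylPart, RI, RRic0, LinearMap.sub_apply, LinearMap.smul_apply,
    AddSubgroupClass.coe_sub, SetLike.val_smul]
  rw [hQ x]
  simp only [wedge_val, Matrix.transpose_one, Matrix.one_mul, Matrix.mul_one]
  rw [hlambQ, hRic0Q, hlambW, hRic0W, hA]
  have hAAT : (A * A)ᵀ = A * A := by rw [Matrix.transpose_mul, hA]
  simp only [Matrix.transpose_add, Matrix.transpose_sub, Matrix.transpose_smul,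
    Matrix.transpose_one, hA, hAAT]
  simp only [mul_add, add_mul, mul_sub, sub_mul, smul_add, smul_sub, smul_smul,
    smul_mul_assoc, mul_smul_comm, Matrix.one_mul, Matrix.mul_one, mul_assoc]
  simp only [ha, hc]
  match_scalars <;> (field_simp <;> ring)

end BW
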